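/- Let g be the function defined in the context. Then for every r ∈ (0, 2l0] one has g'(r) > 0, r g'(r) ≤ g(2l0), and −r g''(r) ≤ (2 − θ) g'(r). In particular, sup over r ∈ (0, 2l0] of ( r g'(r) − r g''(r)/g'(r) ) is at most g(2l0) + (2 − θ), and hence is finite. -/

import Mathlib

open Set Filter MeasureTheory

/-- Shared algebraic step: the second-derivative inequality, with
`A = r^(θ-1)`, `B = r^(θ-2)`, `C = r^(θ-3)`, `d` the (one-sided) derivative of `Φ₁`
and `p = Φ₁ r`. -/
lemma stmt_7_aux_alg (θ c0 r A B C d p : ℝ) (hθ0 : 0 < θ) (hc0 : 0 < c0)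
    (hA : 0 < A) (hd : 0 ≤ d) (e2 : B * r = A) (e3 : C * r = B) :
    -(r * (θ * ((θ - 1) * B) + (c0 * d * B + c0 * p * ((θ - 2) * C)))) ≤
      (2 - θ) * (θ * A + c0 * p * B) := by
  have key : (2 - θ) * (θ * A + c0 * p * B) +
      r * (θ * ((θ - 1) * B) + (c0 * d * B + c0 * p * ((θ - 2) * C))) =
      θ * A + c0 * d * A := by
    rw [← e2, ← e3]; ring
  nlinarith [mul_pos hθ0 hA, mul_nonneg (mul_nonneg hc0.le hd) hA.le]

/-- Lemma 4.2 of the paper, second assertion: on (0,2l0] one has g' > 0,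
r g'(r) ≤ g(2l0) and −r g''(r) ≤ (2−θ) g'(r); hence
sup_{0<r≤2l0} ( r g'(r) − r g''(r)/g'(r) ) ≤ g(2l0) + (2−θ) < ∞. -/
theorem stmt_7
    (l0 θ c0 : ℝ) (hl0 : 0 < l0) (hθ : θ ∈ Ioc (0:ℝ) 1) (hc0 : 0 < c0)
    (Φ₁ : ℝ → ℝ)
    (hΦnn : ∀ r ∈ Icc 0 (2 * l0), 0 ≤ Φ₁ r)
    (hΦcont : ContinuousOn Φ₁ (Icc 0 (2 * l0)))
    (hΦsmooth : ContDiffOn ℝ 3 Φ₁ (Ioc 0 (2 * l0)))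
    (hΦ0 : Φ₁ 0 = 0)
    (hΦ1 : ∀ r ∈ Ioc 0 (2 * l0), 0 ≤ deriv Φ₁ r)
    (hΦ2 : ∀ r ∈ Ioc 0 (2 * l0), deriv (deriv Φ₁) r ≤ 0)
    (hΦ3 : ∀ r ∈ Ioc 0 (2 * l0), 0 ≤ deriv (deriv (deriv Φ₁)) r)
    (hint : IntervalIntegrable (fun z => Φ₁ z * z ^ (θ - 2)) volume 0 (2 * l0))
    (g : ℝ → ℝ)
    (hg : ∀ r, g r = r ^ θ + c0 * ∫ z in (0:ℝ)..r, Φ₁ z * z ^ (θ - 2))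
    (hg' : ∀ r ∈ Ioc 0 (2 * l0), deriv g r = θ * r ^ (θ - 1) + c0 * Φ₁ r * r ^ (θ - 2)) :
    (∀ r ∈ Ioc 0 (2 * l0),
      0 < deriv g r ∧ r * deriv g r ≤ g (2 * l0) ∧
        -(r * deriv (deriv g) r) ≤ (2 - θ) * deriv g r ∧
        r * deriv g r - r * deriv (deriv g) r / deriv g r ≤ g (2 * l0) + (2 - θ)) ∧
    BddAbove ((fun r => r * deriv g r - r * deriv (deriv g) r / deriv g r) '' Ioc 0 (2 * l0)) := by
  obtain ⟨hθ0, hθ1⟩ := hθ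
  have hT : (0:ℝ) < 2 * l0 := by linarith
  set φ : ℝ → ℝ := fun r => θ * r ^ (θ - 1) + c0 * Φ₁ r * r ^ (θ - 2) with hφdef
  have hopen : IsOpen (Ioo (0:ℝ) (2 * l0)) := isOpen_Ioo
  have hsub : Ioo (0:ℝ) (2 * l0) ⊆ Ioc 0 (2 * l0) := Ioo_subset_Ioc_self
  have hΦsm : ContDiffOn ℝ 3 Φ₁ (Ioo 0 (2 * l0)) := hΦsmooth.mono hsub
  have hΦdiff : ∀ x ∈ Ioo (0:ℝ) (2 * l0), DifferentiableAt ℝ Φ₁ x := fun x hx =>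
    (hΦsm.differentiableOn (by norm_num)).differentiableAt (hopen.mem_nhds hx)
  have hΦ'cd : ContDiffOn ℝ 2 (deriv Φ₁) (Ioo 0 (2 * l0)) :=
    hΦsm.deriv_of_isOpen hopen (by norm_num)
  have hΦ'diff : DifferentiableOn ℝ (deriv Φ₁) (Ioo 0 (2 * l0)) :=
    hΦ'cd.differentiableOn (by norm_num)
  -- concavity of Φ₁ on [0, 2l0]
  have hconc : ConcaveOn ℝ (Icc 0 (2 * l0)) Φ₁ := by
    apply concaveOn_of_deriv2_nonpos (convex_Icc _ _) hΦcont
    · rw [interior_Icc]; exact fun x hx => (hΦdiff x hx).differentiableWithinAt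
    · rw [interior_Icc]; exact hΦ'diff
    · rw [interior_Icc]; intro x hx
      simpa [Function.iterate_succ, Function.iterate_zero] using hΦ2 x (hsub hx)
  -- star-shapedness: Φ₁ z ≥ (z/r) Φ₁ r for 0 ≤ z ≤ r
  have hstar : ∀ r ∈ Ioc (0:ℝ) (2 * l0), ∀ z ∈ Icc (0:ℝ) r, z / r * Φ₁ r ≤ Φ₁ z := by
    intro r hr z hz
    have hrI : r ∈ Icc (0:ℝ) (2 * l0) := ⟨hr.1.le, hr.2⟩
    have h0I : (0:ℝ) ∈ Icc (0:ℝ) (2 * l0) := ⟨le_rfl, hT.le⟩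
    have hb : 0 ≤ z / r := div_nonneg hz.1 hr.1.le
    have ha : 0 ≤ 1 - z / r := by
      have : z / r ≤ 1 := (div_le_one hr.1).2 hz.2
      linarith
    have := hconc.2 h0I hrI ha hb (by ring)
    simpa [hΦ0, smul_eq_mul, div_mul_cancel₀ z hr.1.ne'] using this
  -- monotonicity of Φ₁ on [0, 2l0]
  have hmonoΦ : MonotoneOn Φ₁ (Icc 0 (2 * l0)) := by
    apply monotoneOn_of_deriv_nonneg (convex_Icc _ _) hΦcont
    · rw [interior_Icc]; exact fun x hx => (hΦdiff x hx).differentiableWithinAt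
    · rw [interior_Icc]; exact fun x hx => hΦ1 x (hsub hx)
  -- first assertion: positivity of g'
  have hgpos : ∀ r ∈ Ioc (0:ℝ) (2 * l0), 0 < deriv g r := by
    intro r hr
    rw [hg' r hr]
    have h1 : 0 < θ * r ^ (θ - 1) := mul_pos hθ0 (Real.rpow_pos_of_pos hr.1 _)
    have h2 : 0 ≤ c0 * Φ₁ r * r ^ (θ - 2) :=
      mul_nonneg (mul_nonneg hc0.le (hΦnn r ⟨hr.1.le, hr.2⟩)) (Real.rpow_nonneg hr.1.le _)
    linarith
  -- second assertion: r g'(r) ≤ g(2l0)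
  have hkey2 : ∀ r ∈ Ioc (0:ℝ) (2 * l0), r * deriv g r ≤ g (2 * l0) := by
    intro r hr
    obtain ⟨hr0, hr2⟩ := hr
    have e1 : r ^ (θ - 1) * r = r ^ θ := by
      rw [← Real.rpow_add_one hr0.ne' (θ - 1), show θ - 1 + 1 = θ from by ring]
    have e2 : r ^ (θ - 2) * r = r ^ (θ - 1) := by
      rw [← Real.rpow_add_one hr0.ne' (θ - 2), show θ - 2 + 1 = θ - 1 from by ring]
    have hΦr : 0 ≤ Φ₁ r := hΦnn r ⟨hr0.le, hr2⟩
    have hint_r : IntervalIntegrable (fun z => Φ₁ z * z ^ (θ - 2)) volume 0 r := by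
      apply hint.mono_set
      rw [uIcc_of_le hr0.le, uIcc_of_le hT.le]
      exact Icc_subset_Icc le_rfl hr2
    have hint_r2 : IntervalIntegrable (fun z => Φ₁ z * z ^ (θ - 2)) volume r (2 * l0) := by
      apply hint.mono_set
      rw [uIcc_of_le hr2, uIcc_of_le hT.le]
      exact Icc_subset_Icc hr0.le le_rfl
    have hint_p : IntervalIntegrable (fun z => Φ₁ r / r * z ^ (θ - 1)) volume 0 r :=
      (intervalIntegral.intervalIntegrable_rpow' (by linarith)).const_mul _
    -- pointwise a.e. comparison
    have hmono : (∫ z in (0:ℝ)..r, Φ₁ r / r * z ^ (θ - 1)) ≤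
        ∫ z in (0:ℝ)..r, Φ₁ z * z ^ (θ - 2) := by
      apply intervalIntegral.integral_mono_ae_restrict hr0.le hint_p hint_r
      have hzero : ∀ᵐ (z : ℝ) ∂volume, z ≠ 0 := by
        rw [ae_iff]
        simpa using (measure_singleton (0:ℝ))
      filter_upwards [ae_restrict_of_ae hzero, ae_restrict_mem measurableSet_Icc] with z hz0 hz
      have hzpos : 0 < z := lt_of_le_of_ne hz.1 (Ne.symm hz0)
      have hst := hstar r ⟨hr0, hr2⟩ z hz
      have ez : z ^ (θ - 2) * z = z ^ (θ - 1) := by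
        rw [← Real.rpow_add_one hzpos.ne' (θ - 2), show θ - 2 + 1 = θ - 1 from by ring]
      calc Φ₁ r / r * z ^ (θ - 1) = z / r * Φ₁ r * z ^ (θ - 2) := by
            rw [← ez]; ring
        _ ≤ Φ₁ z * z ^ (θ - 2) :=
            mul_le_mul_of_nonneg_right hst (Real.rpow_nonneg hzpos.le _)
    have hI : (∫ z in (0:ℝ)..r, Φ₁ r / r * z ^ (θ - 1)) = Φ₁ r / r * (r ^ θ / θ) := by
      rw [intervalIntegral.integral_const_mul, integral_rpow (Or.inl (by linarith))]
      have h1 : θ - 1 + 1 = θ := by ring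
      rw [h1, Real.zero_rpow hθ0.ne']
      ring
    have hIval : Φ₁ r / r * (r ^ θ / θ) = Φ₁ r * r ^ (θ - 1) / θ := by
      rw [← e1]; field_simp
    have hX : 0 ≤ Φ₁ r * r ^ (θ - 1) := mul_nonneg hΦr (Real.rpow_nonneg hr0.le _)
    have hXle : Φ₁ r * r ^ (θ - 1) ≤ Φ₁ r * r ^ (θ - 1) / θ := by
      rw [le_div_iff₀ hθ0]
      nlinarith
    have hbound : Φ₁ r * r ^ (θ - 1) ≤ ∫ z in (0:ℝ)..r, Φ₁ z * z ^ (θ - 2) := by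
      calc Φ₁ r * r ^ (θ - 1) ≤ Φ₁ r * r ^ (θ - 1) / θ := hXle
        _ = Φ₁ r / r * (r ^ θ / θ) := hIval.symm
        _ = ∫ z in (0:ℝ)..r, Φ₁ r / r * z ^ (θ - 1) := hI.symm
        _ ≤ _ := hmono
    have htail : (∫ z in (0:ℝ)..r, Φ₁ z * z ^ (θ - 2)) ≤
        ∫ z in (0:ℝ)..(2 * l0), Φ₁ z * z ^ (θ - 2) := by
      have hsplit := intervalIntegral.integral_add_adjacent_intervals hint_r hint_r2
      have hnn : 0 ≤ ∫ z in r..(2 * l0), Φ₁ z * z ^ (θ - 2) := by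
        apply intervalIntegral.integral_nonneg hr2
        intro u hu
        exact mul_nonneg (hΦnn u ⟨hr0.le.trans hu.1, hu.2⟩)
          (Real.rpow_nonneg (hr0.le.trans hu.1) _)
      linarith
    have hpow : r ^ θ ≤ (2 * l0) ^ θ := Real.rpow_le_rpow hr0.le hr2 hθ0.le
    have hpownn : (0:ℝ) ≤ r ^ θ := Real.rpow_nonneg hr0.le _
    rw [hg' r ⟨hr0, hr2⟩, hg]
    have expand : r * (θ * r ^ (θ - 1) + c0 * Φ₁ r * r ^ (θ - 2)) =
        θ * r ^ θ + c0 * (Φ₁ r * r ^ (θ - 1)) := by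
      rw [← e1, ← e2]; ring
    rw [expand]
    have h1 : θ * r ^ θ ≤ r ^ θ := by nlinarith
    have h2 : c0 * (Φ₁ r * r ^ (θ - 1)) ≤ c0 * ∫ z in (0:ℝ)..(2 * l0), Φ₁ z * z ^ (θ - 2) :=
      mul_le_mul_of_nonneg_left (hbound.trans htail) hc0.le
    linarith
  -- third assertion
  have hkey3 : ∀ r ∈ Ioc (0:ℝ) (2 * l0), -(r * deriv (deriv g) r) ≤ (2 - θ) * deriv g r := by
    intro r hr
    obtain ⟨hr0, hr2⟩ := hr
    have e2 : r ^ (θ - 2) * r = r ^ (θ - 1) := by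
      rw [← Real.rpow_add_one hr0.ne' (θ - 2), show θ - 2 + 1 = θ - 1 from by ring]
    have e3 : r ^ (θ - 3) * r = r ^ (θ - 2) := by
      rw [← Real.rpow_add_one hr0.ne' (θ - 3), show θ - 3 + 1 = θ - 2 from by ring]
    have hApos : (0:ℝ) < r ^ (θ - 1) := Real.rpow_pos_of_pos hr0 _
    have hd1 : HasDerivAt (fun x : ℝ => x ^ (θ - 1)) ((θ - 1) * r ^ (θ - 2)) r := by
      have h := Real.hasDerivAt_rpow_const (x := r) (p := θ - 1) (Or.inl hr0.ne')
      rwa [show θ - 1 - 1 = θ - 2 by ring] at h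
    have hd2 : HasDerivAt (fun x : ℝ => x ^ (θ - 2)) ((θ - 2) * r ^ (θ - 3)) r := by
      have h := Real.hasDerivAt_rpow_const (x := r) (p := θ - 2) (Or.inl hr0.ne')
      rwa [show θ - 2 - 1 = θ - 3 by ring] at h
    have hΦr : 0 ≤ Φ₁ r := hΦnn r ⟨hr0.le, hr2⟩
    rw [hg' r ⟨hr0, hr2⟩]
    rcases hr2.lt_or_eq with hlt | heq
    · -- interior point
      have hmem : r ∈ Ioo (0:ℝ) (2 * l0) := ⟨hr0, hlt⟩
      have hev : deriv g =ᶠ[nhds r] φ := by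
        filter_upwards [hopen.mem_nhds hmem] with x hx
        exact hg' x (hsub hx)
      have hdΦ : HasDerivAt Φ₁ (deriv Φ₁ r) r := (hΦdiff r hmem).hasDerivAt
      have hdφ : HasDerivAt φ (θ * ((θ - 1) * r ^ (θ - 2)) +
          (c0 * deriv Φ₁ r * r ^ (θ - 2) + c0 * Φ₁ r * ((θ - 2) * r ^ (θ - 3)))) r := by
        exact (hd1.const_mul θ).add ((hdΦ.const_mul c0).mul hd2)
      have hDval : deriv (deriv g) r = θ * ((θ - 1) * r ^ (θ - 2)) +
          (c0 * deriv Φ₁ r * r ^ (θ - 2) + c0 * Φ₁ r * ((θ - 2) * r ^ (θ - 3))) := by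
        rw [hev.deriv_eq]; exact hdφ.deriv
      rw [hDval]
      exact stmt_7_aux_alg θ c0 r _ _ _ _ _ hθ0 hc0 hApos (hΦ1 r ⟨hr0, hr2⟩) e2 e3
    · -- endpoint r = 2*l0
      by_cases hdiff : DifferentiableAt ℝ (deriv g) r
      · have hD : HasDerivAt (deriv g) (deriv (deriv g) r) r := hdiff.hasDerivAt
        have hmemW : Ioo (0:ℝ) r ∈ nhdsWithin r (Iio r) := by
          have := inter_mem_nhdsWithin (Iio r) (Ioi_mem_nhds hr0)
          rwa [Set.Iio_inter_Ioi] at this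
        have hφW : HasDerivWithinAt φ (deriv (deriv g) r) (Iio r) r := by
          apply (hD.hasDerivWithinAt (s := Iio r)).congr_of_eventuallyEq
          · apply Filter.eventuallyEq_of_mem hmemW
            intro x hx
            exact (hg' x ⟨hx.1, hx.2.le.trans hr2⟩).symm
          · exact (hg' r ⟨hr0, hr2⟩).symm
        -- one-sided derivative of Φ₁ at the endpoint
        have hΦW0 : DifferentiableWithinAt ℝ Φ₁ (Ioc 0 (2 * l0)) r :=
          (hΦsmooth.differentiableOn (by norm_num)) r ⟨hr0, hr2⟩
        set d : ℝ := derivWithin Φ₁ (Ioc 0 (2 * l0)) r with hd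
        have hΦW : HasDerivWithinAt Φ₁ d (Iio r) r := by
          apply (hΦW0.hasDerivWithinAt).mono_of_mem_nhdsWithin
          exact mem_of_superset hmemW (fun x hx => ⟨hx.1, hx.2.le.trans hr2⟩)
        have hdnn : 0 ≤ d := by
          have htend := (hasDerivWithinAt_iff_tendsto_slope' (notMem_Iio_self)).mp hΦW
          apply ge_of_tendsto htend
          filter_upwards [hmemW] with x hx
          have hx2 : x ∈ Icc (0:ℝ) (2 * l0) := ⟨hx.1.le, (hx.2.le.trans hr2)⟩
          have hrI : r ∈ Icc (0:ℝ) (2 * l0) := ⟨hr0.le, hr2⟩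
          have hle : Φ₁ x ≤ Φ₁ r := hmonoΦ hx2 hrI hx.2.le
          rw [slope_def_field]
          have hnum : Φ₁ x - Φ₁ r ≤ 0 := by linarith
          have hden : x - r < 0 := by linarith [hx.2]
          exact div_nonneg_of_nonpos hnum hden.le
        have hφW' : HasDerivWithinAt φ (θ * ((θ - 1) * r ^ (θ - 2)) +
            (c0 * d * r ^ (θ - 2) + c0 * Φ₁ r * ((θ - 2) * r ^ (θ - 3)))) (Iio r) r := by
          exact ((hd1.hasDerivWithinAt).const_mul θ).add
            ((hΦW.const_mul c0).mul (hd2.hasDerivWithinAt))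
        have huniq : UniqueDiffWithinAt ℝ (Iio r) r := uniqueDiffWithinAt_Iio r
        have hDval : deriv (deriv g) r = θ * ((θ - 1) * r ^ (θ - 2)) +
            (c0 * d * r ^ (θ - 2) + c0 * Φ₁ r * ((θ - 2) * r ^ (θ - 3))) := by
          rw [← hφW.derivWithin huniq, ← hφW'.derivWithin huniq]
        rw [hDval]
        exact stmt_7_aux_alg θ c0 r _ _ _ _ _ hθ0 hc0 hApos hdnn e2 e3
      · rw [deriv_zero_of_not_differentiableAt hdiff]
        have h1 : 0 < θ * r ^ (θ - 1) := mul_pos hθ0 hApos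
        have h2 : 0 ≤ c0 * Φ₁ r * r ^ (θ - 2) :=
          mul_nonneg (mul_nonneg hc0.le hΦr) (Real.rpow_nonneg hr0.le _)
        have h3 : (0:ℝ) < 2 - θ := by linarith
        nlinarith
  -- fourth assertion
  have hkey4 : ∀ r ∈ Ioc (0:ℝ) (2 * l0),
      r * deriv g r - r * deriv (deriv g) r / deriv g r ≤ g (2 * l0) + (2 - θ) := by
    intro r hr
    have h1 := hgpos r hr
    have h2 := hkey2 r hr
    have h3 := hkey3 r hr
    have h4 : -(r * deriv (deriv g) r) / deriv g r ≤ 2 - θ := by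
      rw [div_le_iff₀ h1]
      linarith
    have h5 : -(r * deriv (deriv g) r) / deriv g r = -(r * deriv (deriv g) r / deriv g r) :=
      neg_div _ _
    linarith [h5 ▸ h4]
  refine ⟨fun r hr => ⟨hgpos r hr, hkey2 r hr, hkey3 r hr, hkey4 r hr⟩, ?_⟩
  refine ⟨g (2 * l0) + (2 - θ), ?_⟩
  rintro x ⟨r, hr, rfl⟩
  exact hkey4 r hr
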